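/- arXiv:2008.10183 — 3 statements merged into one kernel-verified Lean document; each statement's English description precedes it below -/
import Mathlib

section
/- Let n, p ∈ ℕ and let X be an n×p real matrix such that xᵀ(XᵀX)x ≥ ν‖x‖² for all x ∈ ℝᵖ, where ν > 0 (i.e., X has full column rank with smallest singular value at least √ν). Let ξ > 0 and let w, λ : Fin p → ℝ with w_k ≠ 0 and λ_k ≠ 0 for all k, and let s_k ∈ {−1, 1} for each k. Define the diagonal matrices A with A_kk = 6ξ|w_k|/λ_k⁴ and B with B_kk = s_k · 2ξ/λ_k³. If for every k the Schur-complement eigenvalue ρ_k := (2ξ/λ_k³)² · λ_k⁴/(6ξ|w_k|) = 2ξ/(3|w_k|λ_k²) satisfies ρ_k ≤ ν, then the symmetric block matrix H = [[A, B], [B, XᵀX]] is positive semidefinite. -/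
open Matrix

/-- If `XᵀX ⪰ ν·I` (ν > 0) and the Schur-complement eigenvalues
`ρ_k = 2ξ/(3|w_k|λ_k²)` all satisfy `ρ_k ≤ ν`, then the HALO Hessian
`H = [[A, B], [B, XᵀX]]` with `A = diag(6ξ|w_k|/λ_k⁴)` and
`B = diag(s_k · 2ξ/λ_k³)` is positive semidefinite. -/
theorem halo_hessian_posSemidef
    {n p : ℕ} (X : Matrix (Fin n) (Fin p) ℝ) (ν : ℝ) (hν : 0 < ν)
    (hX : ∀ x : Fin p → ℝ, ν * (x ⬝ᵥ x) ≤ x ⬝ᵥ ((Xᵀ * X) *ᵥ x))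
    (ξ : ℝ) (hξ : 0 < ξ) (w lam : Fin p → ℝ)
    (hw : ∀ k, w k ≠ 0) (hlam : ∀ k, lam k ≠ 0)
    (s : Fin p → ℝ) (hs : ∀ k, s k = -1 ∨ s k = 1)
    (A B : Matrix (Fin p) (Fin p) ℝ)
    (hA : A = Matrix.diagonal (fun k => 6 * ξ * |w k| / (lam k) ^ 4))
    (hB : B = Matrix.diagonal (fun k => s k * (2 * ξ) / (lam k) ^ 3))
    (hρ : ∀ k, 2 * ξ / (3 * |w k| * (lam k) ^ 2) ≤ ν) :
    (Matrix.fromBlocks A B B (Xᵀ * X)).PosSemidef := by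
  subst hA hB
  set a : Fin p → ℝ := fun k => 6 * ξ * |w k| / (lam k) ^ 4 with ha
  set b : Fin p → ℝ := fun k => s k * (2 * ξ) / (lam k) ^ 3 with hb
  have hwpos : ∀ k, 0 < |w k| := fun k => abs_pos.mpr (hw k)
  have hl2 : ∀ k, 0 < (lam k) ^ 2 := fun k => pow_two_pos_of_ne_zero (hlam k)
  have hl4 : ∀ k, 0 < (lam k) ^ 4 := fun k => by
    have := hl2 k; nlinarith [this]
  have hapos : ∀ k, 0 < a k := fun k => by
    have := hl4 k; have := hwpos k
    exact div_pos (by positivity) (hl4 k)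
  have hs2 : ∀ k, (s k) ^ 2 = 1 := fun k => by rcases hs k with h | h <;> simp [h]
  -- key: b k ^ 2 ≤ a k * ν
  have hkey : ∀ k, b k ^ 2 ≤ a k * ν := fun k => by
    have hρk := hρ k
    have hb2 : b k ^ 2 = 4 * ξ ^ 2 / (lam k) ^ 6 := by
      rw [hb, div_pow, mul_pow, mul_pow, hs2 k, one_mul]
      norm_num; ring_nf
    have h1 : a k * (2 * ξ / (3 * |w k| * (lam k) ^ 2)) = 4 * ξ ^ 2 / (lam k) ^ 6 := by
      rw [ha]
      have h2 := (hl2 k).ne'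
      have h4 := (hl4 k).ne'
      have hw' := (hwpos k).ne'
      have hinv : (lam k)⁻¹ ^ 6 * (lam k) ^ 6 = 1 := by
        rw [← mul_pow, inv_mul_cancel₀ (hlam k), one_pow]
      field_simp
      ring
    rw [hb2, ← h1]
    exact mul_le_mul_of_nonneg_left hρk (hapos k).le
  refine Matrix.PosSemidef.of_dotProduct_mulVec_nonneg ?_ ?_
  · exact Matrix.IsHermitian.fromBlocks (Matrix.isHermitian_diagonal a)
      ((Matrix.isHermitian_diagonal b).eq) (by simpa [Matrix.conjTranspose_eq_transpose_of_trivial] using Matrix.isHermitian_conjTranspose_mul_self X)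
  · intro x
    have hx : x = Sum.elim (x ∘ Sum.inl) (x ∘ Sum.inr) := by
      funext i; cases i <;> rfl
    set u := x ∘ Sum.inl
    set v := x ∘ Sum.inr
    rw [hx]
    rw [Matrix.fromBlocks_mulVec]
    simp only [star_trivial]
    rw [sumElim_dotProduct_sumElim]
    simp only [Sum.elim_comp_inl, Sum.elim_comp_inr]
    rw [dotProduct_add, dotProduct_add]
    have hd1 : u ⬝ᵥ (Matrix.diagonal a *ᵥ u) = ∑ k, a k * u k ^ 2 := by
      simp [dotProduct, Matrix.mulVec_diagonal]; apply Finset.sum_congr rfl; intros; ring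
    have hd2 : u ⬝ᵥ (Matrix.diagonal b *ᵥ v) = ∑ k, b k * (u k * v k) := by
      simp [dotProduct, Matrix.mulVec_diagonal]; apply Finset.sum_congr rfl; intros; ring
    have hd3 : v ⬝ᵥ (Matrix.diagonal b *ᵥ u) = ∑ k, b k * (u k * v k) := by
      simp [dotProduct, Matrix.mulVec_diagonal]; apply Finset.sum_congr rfl; intros; ring
    rw [hd1, hd2, hd3]
    have hXv := hX v
    have hνv : ν * (v ⬝ᵥ v) = ∑ k, ν * v k ^ 2 := by
      simp [dotProduct, Finset.mul_sum]; apply Finset.sum_congr rfl; intros; ring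
    have hsum : 0 ≤ ∑ k, (a k * u k ^ 2 + 2 * (b k * (u k * v k)) + ν * v k ^ 2) := by
      apply Finset.sum_nonneg
      intro k _
      have hak := hapos k
      have hk := hkey k
      nlinarith [sq_nonneg (a k * u k + b k * v k), sq_nonneg (v k), hak]
    calc (0:ℝ) ≤ ∑ k, (a k * u k ^ 2 + 2 * (b k * (u k * v k)) + ν * v k ^ 2) := hsum
      _ = (∑ k, a k * u k ^ 2) + (∑ k, b k * (u k * v k)) + ((∑ k, b k * (u k * v k)) + ν * (v ⬝ᵥ v)) := by
          rw [hνv]; simp only [← Finset.sum_add_distrib]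
          apply Finset.sum_congr rfl; intros; ring
      _ ≤ (∑ k, a k * u k ^ 2) + (∑ k, b k * (u k * v k)) + ((∑ k, b k * (u k * v k)) + v ⬝ᵥ ((Xᵀ * X) *ᵥ v)) := by
          linarith [hXv]
end

section
/- Under the hypotheses of the previous statement, if the strict inequality ρ_k = 2ξ/(3|w_k|λ_k²) < ν holds for every k, then the symmetric block matrix H = [[A, B], [B, XᵀX]], with A = diag(6ξ|w_k|/λ_k⁴) and B = diag(s_k · 2ξ/λ_k³), is positive definite. -/
open Matrix

/-- If `XᵀX ⪰ ν·I` (ν > 0) and the Schur-complement eigenvalues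
`ρ_k = 2ξ/(3|w_k|λ_k²)` all satisfy the strict bound `ρ_k < ν`, then the HALO
Hessian `H = [[A, B], [B, XᵀX]]` with `A = diag(6ξ|w_k|/λ_k⁴)` and
`B = diag(s_k · 2ξ/λ_k³)` is positive definite. -/
theorem halo_hessian_posDef
    {n p : ℕ} (X : Matrix (Fin n) (Fin p) ℝ) (ν : ℝ) (hν : 0 < ν)
    (hX : ∀ x : Fin p → ℝ, ν * (x ⬝ᵥ x) ≤ x ⬝ᵥ ((Xᵀ * X) *ᵥ x))
    (ξ : ℝ) (hξ : 0 < ξ) (w lam : Fin p → ℝ)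
    (hw : ∀ k, w k ≠ 0) (hlam : ∀ k, lam k ≠ 0)
    (s : Fin p → ℝ) (hs : ∀ k, s k = -1 ∨ s k = 1)
    (A B : Matrix (Fin p) (Fin p) ℝ)
    (hA : A = Matrix.diagonal (fun k => 6 * ξ * |w k| / (lam k) ^ 4))
    (hB : B = Matrix.diagonal (fun k => s k * (2 * ξ) / (lam k) ^ 3))
    (hρ : ∀ k, 2 * ξ / (3 * |w k| * (lam k) ^ 2) < ν) :
    (Matrix.fromBlocks A B B (Xᵀ * X)).PosDef := by
  set a : Fin p → ℝ := fun k => 6 * ξ * |w k| / (lam k) ^ 4 with ha_def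
  set b : Fin p → ℝ := fun k => s k * (2 * ξ) / (lam k) ^ 3 with hb_def
  have hwpos : ∀ k, 0 < |w k| := fun k => abs_pos.mpr (hw k)
  have hl2 : ∀ k, 0 < (lam k) ^ 2 := fun k => by
    rw [← sq_abs]; exact pow_pos (abs_pos.mpr (hlam k)) 2
  have hl4 : ∀ k, 0 < (lam k) ^ 4 := fun k => by
    rw [show (lam k) ^ 4 = ((lam k) ^ 2) ^ 2 from by ring]; exact pow_pos (hl2 k) 2
  have hl6 : ∀ k, 0 < (lam k) ^ 6 := fun k => by
    rw [show (lam k) ^ 6 = ((lam k) ^ 2) ^ 3 from by ring]; exact pow_pos (hl2 k) 3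
  have hapos : ∀ k, 0 < a k := fun k =>
    div_pos (mul_pos (mul_pos (by norm_num) hξ) (hwpos k)) (hl4 k)
  have hs2 : ∀ k, (s k) ^ 2 = 1 := by
    intro k; rcases hs k with h | h <;> rw [h] <;> ring
  have hkey : ∀ k, b k ^ 2 < ν * a k := by
    intro k
    have hρk := hρ k
    have hden : (0:ℝ) < 3 * |w k| * (lam k) ^ 2 :=
      mul_pos (mul_pos (by norm_num) (hwpos k)) (hl2 k)
    rw [div_lt_iff₀ hden] at hρk
    have hbk : b k = s k * (2 * ξ) / (lam k) ^ 3 := rfl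
    have hak : a k = 6 * ξ * |w k| / (lam k) ^ 4 := rfl
    have hb2 : b k ^ 2 = (s k) ^ 2 * (4 * ξ ^ 2) / (lam k) ^ 6 := by
      rw [hbk]; field_simp; ring
    rw [hb2, hs2 k, one_mul, hak, div_lt_iff₀ (hl6 k)]
    have h6 : ν * (6 * ξ * |w k| / (lam k) ^ 4) * (lam k) ^ 6
        = (ν * (3 * |w k| * (lam k) ^ 2)) * (2 * ξ) := by
      have := (hlam k); field_simp; ring
    rw [h6]
    calc 4 * ξ ^ 2 = (2 * ξ) * (2 * ξ) := by ring
      _ < (ν * (3 * |w k| * (lam k) ^ 2)) * (2 * ξ) :=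
          mul_lt_mul_of_pos_right hρk (by positivity)
  rw [Matrix.posDef_iff_dotProduct_mulVec]
  constructor
  · rw [Matrix.isHermitian_fromBlocks_iff]
    refine ⟨?_, ?_, ?_, ?_⟩
    · rw [hA]; exact Matrix.isHermitian_diagonal _
    · rw [hB]; exact Matrix.isHermitian_diagonal _
    · rw [hB]; exact Matrix.isHermitian_diagonal _
    · simpa using Matrix.isHermitian_conjTranspose_mul_self X
  · intro x hx
    set u : Fin p → ℝ := x ∘ Sum.inl with hu
    set v : Fin p → ℝ := x ∘ Sum.inr with hv
    have hxe : x = Sum.elim u v := by funext i; cases i <;> rfl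
    rw [hxe] at hx ⊢
    simp only [star_trivial]
    rw [Matrix.fromBlocks_mulVec, sumElim_dotProduct_sumElim,
      dotProduct_add, dotProduct_add]
    have hdiagA : ∀ (z : Fin p → ℝ), z ⬝ᵥ (A *ᵥ z) = ∑ k, a k * z k ^ 2 := by
      intro z; rw [hA, dotProduct]
      refine Finset.sum_congr rfl fun k _ => ?_
      rw [Matrix.mulVec_diagonal]; ring
    have hdiagB : ∀ (z y : Fin p → ℝ), z ⬝ᵥ (B *ᵥ y) = ∑ k, b k * z k * y k := by
      intro z y; rw [hB, dotProduct]
      refine Finset.sum_congr rfl fun k _ => ?_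
      rw [Matrix.mulVec_diagonal]; ring
    have hXv : ν * (v ⬝ᵥ v) ≤ v ⬝ᵥ ((Xᵀ * X) *ᵥ v) := hX v
    have hvv : ν * (v ⬝ᵥ v) = ∑ k, ν * v k ^ 2 := by
      rw [dotProduct, Finset.mul_sum]
      exact Finset.sum_congr rfl fun k _ => by ring
    have hterm : ∀ k, 0 ≤ a k * (u k + b k / a k * v k) ^ 2 + (ν - b k ^ 2 / a k) * v k ^ 2 := by
      intro k
      have h1 : 0 < ν - b k ^ 2 / a k := by
        rw [sub_pos, div_lt_iff₀ (hapos k)]; linarith [hkey k]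
      have h2 := hapos k
      positivity
    have hsum : ∑ k, (a k * u k ^ 2 + 2 * (b k * u k * v k) + ν * v k ^ 2)
        = ∑ k, (a k * (u k + b k / a k * v k) ^ 2 + (ν - b k ^ 2 / a k) * v k ^ 2) := by
      refine Finset.sum_congr rfl fun k _ => ?_
      have hak := (hapos k).ne'
      field_simp
      ring
    have hpos : 0 < ∑ k, (a k * u k ^ 2 + 2 * (b k * u k * v k) + ν * v k ^ 2) := by
      rw [hsum]
      have hex : ∃ k, u k ≠ 0 ∨ v k ≠ 0 := by
        by_contra h
        push_neg at h
        apply hx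
        funext i
        cases i with
        | inl k => exact (h k).1
        | inr k => exact (h k).2
      obtain ⟨k, hk⟩ := hex
      refine Finset.sum_pos' (fun j _ => hterm j) ⟨k, Finset.mem_univ k, ?_⟩
      have h1 : 0 < ν - b k ^ 2 / a k := by
        rw [sub_pos, div_lt_iff₀ (hapos k)]; linarith [hkey k]
      have h2 := hapos k
      by_cases hvk : v k = 0
      · have huk : u k ≠ 0 := by tauto
        rw [hvk]
        have he : a k * (u k + b k / a k * 0) ^ 2 = a k * u k ^ 2 := by ring
        rw [he]
        positivity
      · have t1 : 0 ≤ a k * (u k + b k / a k * v k) ^ 2 := by positivity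
        have t2 : 0 < (ν - b k ^ 2 / a k) * v k ^ 2 := by positivity
        linarith
    calc (0:ℝ) < ∑ k, (a k * u k ^ 2 + 2 * (b k * u k * v k) + ν * v k ^ 2) := hpos
      _ = (∑ k, a k * u k ^ 2) + (∑ k, b k * u k * v k) + ((∑ k, b k * v k * u k) + ∑ k, ν * v k ^ 2) := by
          rw [← Finset.sum_add_distrib, ← Finset.sum_add_distrib, ← Finset.sum_add_distrib]
          exact Finset.sum_congr rfl fun k _ => by ring
      _ ≤ u ⬝ᵥ (A *ᵥ u) + u ⬝ᵥ (B *ᵥ v) + (v ⬝ᵥ (B *ᵥ u) + v ⬝ᵥ ((Xᵀ * X) *ᵥ v)) := by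
          rw [hdiagA, hdiagB, hdiagB]
          have hle : (∑ k, ν * v k ^ 2) ≤ v ⬝ᵥ ((Xᵀ * X) *ᵥ v) := by rw [← hvv]; exact hXv
          linarith
end

section
/- Let n, p ∈ ℕ, X an n×p real matrix with xᵀ(XᵀX)x ≥ ν‖x‖² for all x ∈ ℝᵖ for some ν > 0, y ∈ ℝⁿ, and ξ > 0. Let S ⊆ ℝᵖ × ℝᵖ be an open convex set such that every (w, λ) ∈ S satisfies w_k > 0, λ_k > 0, and 2ξ ≤ 3ν w_k λ_k² for all k. Then the function f(w, λ) = ½‖y − Xw‖² + ξ Σ_k w_k/λ_k² is convex on S. -/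
set_option maxHeartbeats 1000000

open Matrix Set

section Helpers

lemma scalar_seg (ν ξ a b s r : ℝ) (hν : 0 < ν) (hξ : 0 < ξ)
    (hpos : ∀ θ ∈ Set.Icc (0:ℝ) 1,
      0 < a + θ*s ∧ 0 < b + θ*r ∧ 2*ξ ≤ 3*ν*(a+θ*s)*(b+θ*r)^2) :
    ConvexOn ℝ (Set.Icc (0:ℝ) 1)
      (fun θ => ν/2*(a+θ*s)^2 + ξ*((a+θ*s)/(b+θ*r)^2)) := by
  have hb : ∀ θ ∈ Set.Icc (0:ℝ) 1, (b + θ*r) ≠ 0 := fun θ hθ => (hpos θ hθ).2.1.ne'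
  apply convexOn_of_hasDerivWithinAt2_nonneg (convex_Icc 0 1)
    (f' := fun θ => ν*(a+θ*s)*s + ξ*((s*(b+θ*r) - 2*r*(a+θ*s))/(b+θ*r)^3))
    (f'' := fun θ => ν*s^2 + ξ*((6*r^2*(a+θ*s) - 4*s*r*(b+θ*r))/(b+θ*r)^4))
  · apply ContinuousOn.add
    · fun_prop
    · apply ContinuousOn.mul continuousOn_const
      apply ContinuousOn.div (by fun_prop) (by fun_prop)
      intro θ hθ
      exact pow_ne_zero _ (hb θ hθ)
  · intro θ hθ
    rw [interior_Icc] at hθ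
    have hb0 : (b + θ*r) ≠ 0 := hb θ (Ioo_subset_Icc_self hθ)
    have hnum : HasDerivAt (fun θ : ℝ => a + θ*s) s θ := by
      simpa using ((hasDerivAt_id θ).mul_const s).const_add a
    have hden : HasDerivAt (fun θ : ℝ => b + θ*r) r θ := by
      simpa using ((hasDerivAt_id θ).mul_const r).const_add b
    have hden2 : HasDerivAt (fun θ : ℝ => (b + θ*r)^2) (2*(b+θ*r)*r) θ := by
      simpa using hden.fun_pow 2
    have h1 : HasDerivAt (fun θ : ℝ => ν/2*(a+θ*s)^2) (ν*(a+θ*s)*s) θ :=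
      ((hnum.pow 2).const_mul (ν/2)).congr_deriv (by push_cast; ring)
    have h2 : HasDerivAt (fun θ : ℝ => (a+θ*s)/(b+θ*r)^2)
        ((s*(b+θ*r) - 2*r*(a+θ*s))/(b+θ*r)^3) θ := by
      have := hnum.div hden2 (pow_ne_zero 2 hb0)
      refine this.congr_deriv ?_
      field_simp
    exact ((h1.add (h2.const_mul ξ)).congr_deriv (by ring)).hasDerivWithinAt
  · intro θ hθ
    rw [interior_Icc] at hθ
    have hb0 : (b + θ*r) ≠ 0 := hb θ (Ioo_subset_Icc_self hθ)
    have hder : HasDerivAt (fun θ : ℝ => b + θ*r) r θ := by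
      simpa using ((hasDerivAt_id θ).mul_const r).const_add b
    have hder2 : HasDerivAt (fun θ : ℝ => a + θ*s) s θ := by
      simpa using ((hasDerivAt_id θ).mul_const s).const_add a
    have hnum : HasDerivAt (fun θ : ℝ => s*(b+θ*r) - 2*r*(a+θ*s)) (s*r - 2*r*s) θ :=
      (hder.const_mul s).sub (hder2.const_mul (2*r))
    have hden : HasDerivAt (fun θ : ℝ => (b+θ*r)^3) (3*(b+θ*r)^2*r) θ := by
      simpa using hder.fun_pow 3
    have hlin : HasDerivAt (fun θ : ℝ => ν*(a+θ*s)*s) (ν*s^2) θ := by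
      have := (hder2.const_mul ν).mul_const s
      refine this.congr_deriv ?_
      ring
    have hdiv : HasDerivAt (fun θ : ℝ => (s*(b+θ*r) - 2*r*(a+θ*s))/(b+θ*r)^3)
        ((6*r^2*(a+θ*s) - 4*s*r*(b+θ*r))/(b+θ*r)^4) θ := by
      have := hnum.div hden (pow_ne_zero 3 hb0)
      refine this.congr_deriv ?_
      field_simp
      ring
    exact (hlin.add (hdiv.const_mul ξ)).hasDerivWithinAt
  · intro θ hθ
    rw [interior_Icc] at hθ
    obtain ⟨hw, hl, hc⟩ := hpos θ (Ioo_subset_Icc_self hθ)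
    set w := a + θ*s
    set l := b + θ*r
    have key : 0 ≤ ν*s^2*l^4 - 4*ξ*s*r*l + 6*ξ*r^2*w := by
      nlinarith [sq_nonneg (ν*l^3*s - 2*ξ*r),
        mul_nonneg (mul_nonneg hξ.le (sq_nonneg r)) (sub_nonneg.2 hc),
        mul_pos hν (pow_pos hl 2), sq_nonneg l]
    have hl4 : (0:ℝ) < l^4 := pow_pos hl 4
    have heq : ν*s^2 + ξ*((6*r^2*w - 4*s*r*l)/l^4)
        = (ν*s^2*l^4 - 4*ξ*s*r*l + 6*ξ*r^2*w)/l^4 := by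
      field_simp
      ring
    rw [heq]
    positivity

lemma quad_convex (c0 c1 c2 : ℝ) (h : 0 ≤ c2) :
    ConvexOn ℝ (Set.Icc (0:ℝ) 1) (fun θ => c0 + c1*θ + c2*θ^2) := by
  refine ⟨convex_Icc _ _, ?_⟩
  intro x _ y _ p q hp hq hpq
  simp only [smul_eq_mul]
  have key : p*(c0 + c1*x + c2*x^2) + q*(c0 + c1*y + c2*y^2)
      - (c0 + c1*(p*x+q*y) + c2*(p*x+q*y)^2) = c2*(p*q)*(x-y)^2 := by
    have hq1 : q = 1 - p := by linarith
    subst hq1; ring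
  nlinarith [mul_nonneg (mul_nonneg h (mul_nonneg hp hq)) (sq_nonneg (x-y))]

lemma convexOn_finsetSum {E : Type*} [AddCommGroup E] [Module ℝ E] {s : Set E}
    (hs : Convex ℝ s) {ι : Type*} (t : Finset ι) {g : ι → E → ℝ}
    (h : ∀ i ∈ t, ConvexOn ℝ s (g i)) :
    ConvexOn ℝ s (fun x => ∑ i ∈ t, g i x) := by
  classical
  induction t using Finset.cons_induction with
  | empty => simpa using convexOn_const 0 hs
  | cons i t hi ih =>
    simp only [Finset.sum_cons]
    exact (h i (Finset.mem_cons_self _ _)).add (ih fun j hj => h j (Finset.mem_cons_of_mem hj))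

lemma convexOn_congr {E : Type*} [AddCommGroup E] [Module ℝ E] {s : Set E}
    {f g : E → ℝ} (h : ConvexOn ℝ s g) (hfg : ∀ x ∈ s, f x = g x) : ConvexOn ℝ s f := by
  refine ⟨h.1, fun x hx y hy p q hp hq hpq => ?_⟩
  rw [hfg _ (h.1 hx hy hp hq hpq), hfg _ hx, hfg _ hy]
  exact h.2 hx hy hp hq hpq

end Helpers

/-- Theorem 1 (convexity of the HALO-penalized linear-model loss): if
`XᵀX ⪰ ν·I` with `ν > 0` and `S` is an open convex region on which all entries
of `w` and `λ` are positive and `2ξ ≤ 3ν w_k λ_k²` for every `k`, then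
`f(w, λ) = ½‖y − Xw‖² + ξ Σ_k w_k/λ_k²` is convex on `S`. -/
theorem halo_loss_convexOn
    {n p : ℕ} (X : Matrix (Fin n) (Fin p) ℝ) (ν : ℝ) (hν : 0 < ν)
    (hX : ∀ x : Fin p → ℝ, ν * (x ⬝ᵥ x) ≤ x ⬝ᵥ ((Xᵀ * X) *ᵥ x))
    (y : Fin n → ℝ) (ξ : ℝ) (hξ : 0 < ξ)
    (S : Set ((Fin p → ℝ) × (Fin p → ℝ)))
    (hSopen : IsOpen S) (hSconv : Convex ℝ S)
    (hS : ∀ q ∈ S, ∀ k,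
      0 < q.1 k ∧ 0 < q.2 k ∧ 2 * ξ ≤ 3 * ν * q.1 k * (q.2 k) ^ 2) :
    ConvexOn ℝ S (fun q : (Fin p → ℝ) × (Fin p → ℝ) =>
      (1 / 2) * ((y - X *ᵥ q.1) ⬝ᵥ (y - X *ᵥ q.1)) +
        ξ * ∑ k, q.1 k / (q.2 k) ^ 2) := by
  refine ⟨hSconv, ?_⟩
  intro u hu v hv α β hα hβ hαβ
  set Δ₁ : Fin p → ℝ := v.1 - u.1 with hΔ₁
  set Δ₂ : Fin p → ℝ := v.2 - u.2 with hΔ₂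
  set e : Fin n → ℝ := y - X *ᵥ u.1 with he
  set z : Fin n → ℝ := X *ᵥ Δ₁ with hz
  set c0 : ℝ := (1/2)*(e ⬝ᵥ e) - ν/2*(u.1 ⬝ᵥ u.1) with hc0
  set c1 : ℝ := -(e ⬝ᵥ z) - ν*(u.1 ⬝ᵥ Δ₁) with hc1
  set c2 : ℝ := (1/2)*(z ⬝ᵥ z) - ν/2*(Δ₁ ⬝ᵥ Δ₁) with hc2
  have hmem : ∀ θ ∈ Set.Icc (0:ℝ) 1, (1-θ) • u + θ • v ∈ S := fun θ hθ =>
    hSconv hu hv (by linarith [hθ.2]) hθ.1 (by ring)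
  have hcoord1 : ∀ (θ : ℝ) (k : Fin p), ((1-θ) • u + θ • v).1 k = u.1 k + θ * Δ₁ k := by
    intro θ k
    simp only [Prod.fst_add, Prod.smul_fst, Pi.add_apply, Pi.smul_apply, smul_eq_mul,
      hΔ₁, Pi.sub_apply]
    ring
  have hcoord2 : ∀ (θ : ℝ) (k : Fin p), ((1-θ) • u + θ • v).2 k = u.2 k + θ * Δ₂ k := by
    intro θ k
    simp only [Prod.snd_add, Prod.smul_snd, Pi.add_apply, Pi.smul_apply, smul_eq_mul,
      hΔ₂, Pi.sub_apply]
    ring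
  have hc2nonneg : 0 ≤ c2 := by
    have hXX : Δ₁ ⬝ᵥ ((Xᵀ * X) *ᵥ Δ₁) = z ⬝ᵥ z := by
      rw [← mulVec_mulVec, dotProduct_mulVec, vecMul_transpose]
    have := hX Δ₁
    rw [hXX] at this
    rw [hc2]
    linarith
  have hk : ∀ k : Fin p, ConvexOn ℝ (Set.Icc (0:ℝ) 1)
      (fun θ => ν/2*(u.1 k + θ*Δ₁ k)^2 + ξ*((u.1 k + θ*Δ₁ k)/(u.2 k + θ*Δ₂ k)^2)) := by
    intro k
    apply scalar_seg ν ξ (u.1 k) (u.2 k) (Δ₁ k) (Δ₂ k) hν hξ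
    intro θ hθ
    obtain ⟨h1, h2, h3⟩ := hS _ (hmem θ hθ) k
    rw [hcoord1 θ k] at h1 h3
    rw [hcoord2 θ k] at h2 h3
    exact ⟨h1, h2, h3⟩
  have hsumconv : ConvexOn ℝ (Set.Icc (0:ℝ) 1) (fun θ =>
      ∑ k, (ν/2*(u.1 k + θ*Δ₁ k)^2 + ξ*((u.1 k + θ*Δ₁ k)/(u.2 k + θ*Δ₂ k)^2))) :=
    convexOn_finsetSum (convex_Icc (0:ℝ) 1) Finset.univ (fun k _ => hk k)
  have hgconv : ConvexOn ℝ (Set.Icc (0:ℝ) 1) (fun θ => (c0 + c1*θ + c2*θ^2) +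
      ∑ k, (ν/2*(u.1 k + θ*Δ₁ k)^2 + ξ*((u.1 k + θ*Δ₁ k)/(u.2 k + θ*Δ₂ k)^2))) :=
    (quad_convex c0 c1 c2 hc2nonneg).add hsumconv
  -- pointwise identity along the segment
  have hfg : ∀ θ : ℝ,
      (1 / 2) * ((y - X *ᵥ ((1-θ) • u + θ • v).1) ⬝ᵥ (y - X *ᵥ ((1-θ) • u + θ • v).1)) +
        ξ * ∑ k, ((1-θ) • u + θ • v).1 k / (((1-θ) • u + θ • v).2 k) ^ 2
      = (c0 + c1*θ + c2*θ^2) +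
        ∑ k, (ν/2*(u.1 k + θ*Δ₁ k)^2 + ξ*((u.1 k + θ*Δ₁ k)/(u.2 k + θ*Δ₂ k)^2)) := by
    intro θ
    have hA : ∑ k, ((1-θ) • u + θ • v).1 k / (((1-θ) • u + θ • v).2 k) ^ 2
        = ∑ k, (u.1 k + θ*Δ₁ k)/(u.2 k + θ*Δ₂ k)^2 :=
      Finset.sum_congr rfl fun k _ => by rw [hcoord1 θ k, hcoord2 θ k]
    have hw1 : ((1-θ) • u + θ • v).1 = u.1 + θ • Δ₁ := by
      simp only [Prod.fst_add, Prod.smul_fst, hΔ₁]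
      module
    have hyX : y - X *ᵥ (u.1 + θ • Δ₁) = e - θ • z := by
      rw [mulVec_add, mulVec_smul, he, hz]
      abel
    have hquad : (1/2 : ℝ) * ((e - θ • z) ⬝ᵥ (e - θ • z))
        = (1/2)*(e ⬝ᵥ e) - θ*(e ⬝ᵥ z) + θ^2*((1/2)*(z ⬝ᵥ z)) := by
      simp only [sub_dotProduct, dotProduct_sub, smul_dotProduct, dotProduct_smul,
        smul_eq_mul, dotProduct_comm z e]
      ring
    have hsum : ∑ k, (ν/2*(u.1 k + θ*Δ₁ k)^2 + ξ*((u.1 k + θ*Δ₁ k)/(u.2 k + θ*Δ₂ k)^2))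
        = ν/2*(u.1 ⬝ᵥ u.1) + θ*(ν*(u.1 ⬝ᵥ Δ₁)) + θ^2*(ν/2*(Δ₁ ⬝ᵥ Δ₁))
          + ξ * ∑ k, (u.1 k + θ*Δ₁ k)/(u.2 k + θ*Δ₂ k)^2 := by
      rw [Finset.sum_add_distrib]
      congr 1
      · simp only [dotProduct, Finset.mul_sum]
        rw [← Finset.sum_add_distrib, ← Finset.sum_add_distrib]
        exact Finset.sum_congr rfl fun k _ => by ring
      · exact (Finset.mul_sum _ _ _).symm
    rw [hA, hw1, hyX, hquad, hsum, hc0, hc1, hc2]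
    ring
  -- conclude
  have h0 : (0:ℝ) ∈ Set.Icc (0:ℝ) 1 := ⟨le_refl 0, zero_le_one⟩
  have h1 : (1:ℝ) ∈ Set.Icc (0:ℝ) 1 := ⟨zero_le_one, le_refl 1⟩
  have hkey := hgconv.2 h0 h1 hα hβ hαβ
  simp only [smul_eq_mul] at hkey
  rw [show α*(0:ℝ)+β*1 = β from by ring] at hkey
  have hg0 := hfg 0
  have hg1 := hfg 1
  have hgβ := hfg β
  have e0 : (1-(0:ℝ)) • u + (0:ℝ) • v = u := by module
  have e1 : (1-(1:ℝ)) • u + (1:ℝ) • v = v := by module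
  have eβ : (1-β) • u + β • v = α • u + β • v := by
    rw [show α = 1 - β by linarith]
  rw [e0] at hg0
  rw [e1] at hg1
  rw [eβ] at hgβ
  simp only [smul_eq_mul]
  rw [hgβ, hg0, hg1]
  exact hkey
end
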